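/- Let K be an antilinear isometric involution on L²(ℝ) and P_t the projection onto L²(-∞,t) (multiplication by the indicator of (-∞,t)). Define V_t = L²(t,∞) ∩ K(L²(t,∞)) (functions f with supp f ⊆ [t,∞) and supp Kf ⊆ [t,∞)). Suppose ‖P_t K P_t‖ < 1 as an operator on L²(-∞,t). Then the orthogonal complement of V_t in L²(ℝ) equals L²(-∞,t) + K(L²(-∞,t)), and this sum is closed. -/

import Mathlib

open MeasureTheory

private lemma stmt19_aux {c' A B D s ε : ℝ} (hc'1 : c' < 1) (hs : s ^ 2 = 1 - c')
    (hs0 : 0 ≤ s) (hd : D < s * ε) (hD : 0 ≤ D) (hA : 0 ≤ A) (hB : 0 ≤ B)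
    (hε : 0 < ε) (h : (1 - c') * (A ^ 2 + B ^ 2) ≤ D ^ 2) : A < ε ∧ B < ε := by
  have h1c : (0:ℝ) < 1 - c' := by linarith
  have hD2 : D ^ 2 < (1 - c') * ε ^ 2 := by nlinarith
  have hA2 : A ^ 2 < ε ^ 2 := by nlinarith [sq_nonneg B]
  have hB2 : B ^ 2 < ε ^ 2 := by nlinarith [sq_nonneg A]
  constructor <;> nlinarith

set_option maxHeartbeats 1000000 in
/-- Let `K` be an antilinear isometric self-adjoint involution (conjugation) on
`L²(ℝ)` and `P = P_t` the orthogonal projection onto `L²(-∞, t)` (multiplication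
by the indicator of `(-∞, t)`).  Let `V_t = L²(t,∞) ∩ K L²(t,∞)`, i.e. the set
of `f` with `P f = 0` and `P (K f) = 0`.  If `‖P K P‖ < 1` as an operator on
`L²(-∞,t)`, then the orthogonal complement of `V_t` equals
`L²(-∞,t) + K(L²(-∞,t))`, and this sum is closed. -/
theorem stmt19 (t : ℝ)
    (K : Lp ℂ 2 (volume : Measure ℝ) → Lp ℂ 2 (volume : Measure ℝ))
    (hK_add : ∀ f g, K (f + g) = K f + K g)
    (hK_smul : ∀ (a : ℂ) f, K (a • f) = (starRingEnd ℂ) a • K f)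
    (hK_isom : ∀ f, ‖K f‖ = ‖f‖)
    (hK_inv : ∀ f, K (K f) = f)
    (hK_sa : ∀ f g, (inner ℂ (K f) g : ℂ) = (starRingEnd ℂ) (inner ℂ f (K g) : ℂ))
    (P : Lp ℂ 2 (volume : Measure ℝ) →L[ℂ] Lp ℂ 2 (volume : Measure ℝ))
    (hP : ∀ f : Lp ℂ 2 (volume : Measure ℝ),
      (P f : ℝ → ℂ) =ᵐ[volume] Set.indicator (Set.Iio t) f)
    (hnorm : ∃ c : ℝ, c < 1 ∧ ∀ f, P f = f → ‖P (K f)‖ ≤ c * ‖f‖) :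
    {g : Lp ℂ 2 (volume : Measure ℝ) |
        ∀ f, (P f = 0 ∧ P (K f) = 0) → (inner ℂ f g : ℂ) = 0}
      = {g | ∃ h₁ h₂, P h₁ = h₁ ∧ P h₂ = h₂ ∧ g = h₁ + K h₂} ∧
    IsClosed {g : Lp ℂ 2 (volume : Measure ℝ) |
        ∃ h₁ h₂, P h₁ = h₁ ∧ P h₂ = h₂ ∧ g = h₁ + K h₂} := by
  classical
  obtain ⟨c, hc1, hc⟩ := hnorm
  set c' : ℝ := max c 0 with hc'def
  have hc'0 : 0 ≤ c' := le_max_right _ _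
  have hc'1 : c' < 1 := max_lt hc1 one_pos
  have hc' : ∀ f, P f = f → ‖P (K f)‖ ≤ c' * ‖f‖ := fun f hf =>
    (hc f hf).trans (mul_le_mul_of_nonneg_right (le_max_left _ _) (norm_nonneg _))
  -- basic facts about K
  have hK0 : K 0 = 0 := by
    have := hK_smul 0 0
    simpa using this
  have hKsub : ∀ f g, K (f - g) = K f - K g := by
    intro f g
    have hneg : K (-g) = -K g := by
      have := hK_smul (-1) g
      simpa using this
    rw [sub_eq_add_neg, hK_add, hneg, sub_eq_add_neg]
  have hKcont : Continuous K := by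
    have : Isometry K := Isometry.of_dist_eq (fun a b => by
      rw [dist_eq_norm, dist_eq_norm, ← hKsub, hK_isom])
    exact this.continuous
  -- P is self-adjoint
  have hPsa : ∀ f g : Lp ℂ 2 (volume : Measure ℝ),
      (inner ℂ (P f) g : ℂ) = inner ℂ f (P g) := by
    intro f g
    rw [MeasureTheory.L2.inner_def, MeasureTheory.L2.inner_def]
    refine integral_congr_ae ?_
    filter_upwards [hP f, hP g] with x h1 h2
    rw [h1, h2]
    simp only [RCLike.inner_apply, Set.indicator_apply]
    split_ifs <;> simp
  -- P is idempotent
  have hPP : ∀ f, P (P f) = P f := by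
    intro f
    apply Lp.ext
    filter_upwards [hP (P f), hP f] with x h1 h2
    rw [h1]
    simp only [Set.indicator_apply]
    split_ifs with hx
    · rfl
    · rw [h2]
      simp [Set.indicator_apply, hx]
  -- the key quantitative lower bound
  have hbound : ∀ a b : Lp ℂ 2 (volume : Measure ℝ), P a = a → P b = b →
      (1 - c') * (‖a‖ ^ 2 + ‖b‖ ^ 2) ≤ ‖a + K b‖ ^ 2 := by
    intro a b ha hb
    have h1 : ‖a + K b‖ ^ 2
        = ‖a‖ ^ 2 + 2 * RCLike.re (inner ℂ a (K b) : ℂ) + ‖K b‖ ^ 2 :=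
      norm_add_sq (𝕜 := ℂ) a (K b)
    have h2 : (inner ℂ a (K b) : ℂ) = inner ℂ a (P (K b)) := by
      conv_lhs => rw [← ha]
      rw [hPsa]
    have h3 : ‖P (K b)‖ ≤ c' * ‖b‖ := hc' b hb
    have h4 : |RCLike.re (inner ℂ a (P (K b)) : ℂ)| ≤ ‖a‖ * (c' * ‖b‖) := by
      calc |RCLike.re (inner ℂ a (P (K b)) : ℂ)| ≤ ‖(inner ℂ a (P (K b)) : ℂ)‖ :=
            RCLike.abs_re_le_norm _
        _ ≤ ‖a‖ * ‖P (K b)‖ := norm_inner_le_norm _ _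
        _ ≤ ‖a‖ * (c' * ‖b‖) := mul_le_mul_of_nonneg_left h3 (norm_nonneg _)
    rw [h1, h2, hK_isom]
    have h5 := abs_le.mp h4
    nlinarith [norm_nonneg a, norm_nonneg b, sq_nonneg (‖a‖ - ‖b‖),
      mul_nonneg hc'0 (sq_nonneg (‖a‖ - ‖b‖))]
  -- the submodule V
  let V : Submodule ℂ (Lp ℂ 2 (volume : Measure ℝ)) :=
    { carrier := {f | P f = 0 ∧ P (K f) = 0}
      add_mem' := by
        rintro f g ⟨hf1, hf2⟩ ⟨hg1, hg2⟩
        exact ⟨by rw [map_add, hf1, hg1, add_zero],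
               by rw [hK_add, map_add, hf2, hg2, add_zero]⟩
      zero_mem' := ⟨by simp, by rw [hK0]; simp⟩
      smul_mem' := by
        rintro a f ⟨hf1, hf2⟩
        exact ⟨by rw [_root_.map_smul, hf1, smul_zero],
               by rw [hK_smul, _root_.map_smul, hf2, smul_zero]⟩ }
  -- the submodule S
  let S : Submodule ℂ (Lp ℂ 2 (volume : Measure ℝ)) :=
    { carrier := {g | ∃ h₁ h₂, P h₁ = h₁ ∧ P h₂ = h₂ ∧ g = h₁ + K h₂}
      add_mem' := by
        rintro f g ⟨f₁, f₂, hf1, hf2, rfl⟩ ⟨g₁, g₂, hg1, hg2, rfl⟩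
        exact ⟨f₁ + g₁, f₂ + g₂, by rw [map_add, hf1, hg1],
          by rw [map_add, hf2, hg2], by rw [hK_add]; abel⟩
      zero_mem' := ⟨0, 0, by simp, by simp, by rw [hK0]; simp⟩
      smul_mem' := by
        rintro a g ⟨g₁, g₂, hg1, hg2, rfl⟩
        refine ⟨a • g₁, (starRingEnd ℂ) a • g₂, by rw [_root_.map_smul, hg1],
          by rw [_root_.map_smul, hg2], ?_⟩
        rw [hK_smul]
        simp [smul_add] }
  -- S is closed
  have hSclosed : IsClosed (S : Set (Lp ℂ 2 (volume : Measure ℝ))) := by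
    rw [← isSeqClosed_iff_isClosed]
    intro x g hx hg
    choose h₁ h₂ hx1 hx2 hxe using hx
    have hdiff : ∀ n m, (1 - c') * (‖h₁ n - h₁ m‖ ^ 2 + ‖h₂ n - h₂ m‖ ^ 2)
        ≤ ‖x n - x m‖ ^ 2 := by
      intro n m
      have h := hbound (h₁ n - h₁ m) (h₂ n - h₂ m)
        (by rw [map_sub, hx1, hx1]) (by rw [map_sub, hx2, hx2])
      have hx' : x n - x m = (h₁ n - h₁ m) + K (h₂ n - h₂ m) := by
        rw [hKsub, hxe n, hxe m]; abel
      rwa [← hx'] at h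
    have hcx : CauchySeq x := hg.cauchySeq
    have h1c : (0:ℝ) < 1 - c' := by linarith
    have key : ∀ ε > (0:ℝ), ∃ N, ∀ n ≥ N, ∀ m ≥ N,
        ‖h₁ n - h₁ m‖ < ε ∧ ‖h₂ n - h₂ m‖ < ε := by
      intro ε hε
      have hδ : 0 < Real.sqrt (1 - c') * ε :=
        mul_pos (Real.sqrt_pos.2 h1c) hε
      obtain ⟨N, hN⟩ := Metric.cauchySeq_iff.mp hcx _ hδ
      refine ⟨N, fun n hn m hm => ?_⟩
      have hd := hN n hn m hm
      rw [dist_eq_norm] at hd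
      exact stmt19_aux hc'1 (Real.sq_sqrt h1c.le) (Real.sqrt_nonneg _) hd
        (norm_nonneg _) (norm_nonneg _) (norm_nonneg _) hε (hdiff n m)
    have hc1s : CauchySeq h₁ := Metric.cauchySeq_iff.mpr (fun ε hε => by
      obtain ⟨N, hN⟩ := key ε hε
      exact ⟨N, fun n hn m hm => by
        rw [dist_eq_norm]; exact (hN n hn m hm).1⟩)
    have hc2s : CauchySeq h₂ := Metric.cauchySeq_iff.mpr (fun ε hε => by
      obtain ⟨N, hN⟩ := key ε hε
      exact ⟨N, fun n hn m hm => by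
        rw [dist_eq_norm]; exact (hN n hn m hm).2⟩)
    obtain ⟨l₁, hl₁⟩ := cauchySeq_tendsto_of_complete hc1s
    obtain ⟨l₂, hl₂⟩ := cauchySeq_tendsto_of_complete hc2s
    refine ⟨l₁, l₂, ?_, ?_, ?_⟩
    · have h' : Filter.Tendsto (fun n => P (h₁ n)) Filter.atTop (nhds (P l₁)) :=
        (P.continuous.tendsto l₁).comp hl₁
      rw [show (fun n => P (h₁ n)) = h₁ from funext hx1] at h'
      exact tendsto_nhds_unique h' hl₁
    · have h' : Filter.Tendsto (fun n => P (h₂ n)) Filter.atTop (nhds (P l₂)) :=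
        (P.continuous.tendsto l₂).comp hl₂
      rw [show (fun n => P (h₂ n)) = h₂ from funext hx2] at h'
      exact tendsto_nhds_unique h' hl₂
    · have h' : Filter.Tendsto (fun n => h₁ n + K (h₂ n)) Filter.atTop
          (nhds (l₁ + K l₂)) :=
        hl₁.add ((hKcont.tendsto l₂).comp hl₂)
      rw [show (fun n => h₁ n + K (h₂ n)) = x from funext fun n => (hxe n).symm] at h'
      exact tendsto_nhds_unique hg h'
  haveI : CompleteSpace S := hSclosed.completeSpace_coe
  -- Sᗮ = V
  have hVS : Sᗮ = V := by
    ext f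
    rw [Submodule.mem_orthogonal]
    constructor
    · intro h
      have hPfS : (P f) ∈ S := ⟨P f, 0, hPP f, by simp, by rw [hK0, add_zero]⟩
      have h1 : (inner ℂ (P f) f : ℂ) = 0 := h _ hPfS
      have hPf : P f = 0 := by
        have h0 : (inner ℂ (P f) (P f) : ℂ) = 0 := by
          rw [hPsa, hPP, ← inner_conj_symm, h1]
          simp
        exact inner_self_eq_zero.mp h0
      refine ⟨hPf, ?_⟩
      have hKuS : K (P (K f)) ∈ S :=
        ⟨0, P (K f), by simp, hPP (K f), (zero_add _).symm⟩
      have h2 : (inner ℂ (K (P (K f))) f : ℂ) = 0 := h _ hKuS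
      have h3 : (inner ℂ (P (K f)) (P (K f)) : ℂ) = 0 := by
        rw [hPsa, hPP, hK_sa, inner_conj_symm]
        exact h2
      exact inner_self_eq_zero.mp h3
    · rintro ⟨hf1, hf2⟩ s ⟨s₁, s₂, hs1, hs2, rfl⟩
      rw [inner_add_left]
      have e1 : (inner ℂ s₁ f : ℂ) = 0 := by
        rw [← hs1, hPsa, hf1]
        simp
      have e2 : (inner ℂ (K s₂) f : ℂ) = 0 := by
        rw [hK_sa]
        have h0 : (inner ℂ s₂ (K f) : ℂ) = 0 := by
          rw [← hs2, hPsa, hf2]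
          simp
        rw [h0]
        simp
      rw [e1, e2, add_zero]
  have hVorth : Vᗮ = S := by rw [← hVS, Submodule.orthogonal_orthogonal]
  constructor
  · ext g
    simp only [Set.mem_setOf_eq]
    constructor
    · intro h
      have hg : g ∈ Vᗮ :=
        (Submodule.mem_orthogonal V g).mpr (fun u hu => h u hu)
      rw [hVorth] at hg
      exact hg
    · intro h
      have hg : g ∈ Vᗮ := by rw [hVorth]; exact h
      exact fun f hf => (Submodule.mem_orthogonal V g).mp hg f hf
  · exact hSclosed
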